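/- arXiv:2511.04391 — 2 statements merged into one kernel-verified Lean document; each statement's English description precedes it below -/
import Mathlib

section
/- Let A be a C*-algebra, 𝒜 ⊆ A a dense *-subalgebra, and I_1, …, I_n ⊆ A closed two-sided ideals such that I_j ∩ 𝒜 is dense in I_j for each j = 1, …, n. Then (⋂_{j=1}^n I_j) ∩ 𝒜 is dense in ⋂_{j=1}^n I_j. -/
open scoped NNReal

lemma small_aux (a ε : ℝ) (ha : 0 ≤ a) (hε : 0 < ε) : a * (ε / (4 * (a + 1))) ≤ ε / 4 := by
  rw [mul_div_assoc']
  rw [div_le_div_iff₀ (by positivity) (by positivity)]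
  nlinarith

/-- key approximation: for any `x` and `ε > 0` there is `c` with
`‖x * ((star x * x) * c) - x‖ < ε`. -/
lemma key_approx {A : Type*} [NonUnitalCStarAlgebra A] (x : A) {ε : ℝ} (hε : 0 < ε) :
    ∃ c : A, ‖x * ((star x * x) * c) - x‖ < ε := by
  set a : A := star x * x with ha_def
  have ha : IsSelfAdjoint a := IsSelfAdjoint.star_mul_self x
  set δ : ℝ := ε ^ 4 with hδ_def
  have hδ : (0:ℝ) < δ := by positivity
  set g : ℝ → ℝ := fun t ↦ t ^ 2 / (t ^ 2 + δ) with hg_def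
  have hgc : Continuous g := by
    apply Continuous.div (by fun_prop) (by fun_prop)
    intro t; positivity
  have hg0 : g 0 = 0 := by simp [hg_def]
  set c : A := cfcₙ (fun t : ℝ ↦ t / (t ^ 2 + δ)) a with hc_def
  have hcc : Continuous (fun t : ℝ ↦ t / (t ^ 2 + δ)) := by
    apply Continuous.div (by fun_prop) (by fun_prop)
    intro t; positivity
  refine ⟨c, ?_⟩
  set e : A := a * c with he_def
  have he : e = cfcₙ g a := by
    rw [he_def, hc_def]
    symm
    calc cfcₙ g a = cfcₙ (fun t : ℝ ↦ t * (t / (t ^ 2 + δ))) a := by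
          apply cfcₙ_congr
          intro t _
          show t ^ 2 / (t ^ 2 + δ) = t * (t / (t ^ 2 + δ))
          rw [sq, mul_div_assoc]
      _ = cfcₙ (fun t : ℝ ↦ t) a * cfcₙ (fun t : ℝ ↦ t / (t ^ 2 + δ)) a :=
          cfcₙ_mul _ _ a (by fun_prop) (by simp) hcc.continuousOn (by simp)
      _ = a * cfcₙ (fun t : ℝ ↦ t / (t ^ 2 + δ)) a := by rw [cfcₙ_id' ℝ a ha]
  have hesa : IsSelfAdjoint e := he ▸ cfcₙ_predicate g a
  -- the main C*-identity
  have key : star (x * e - x) * (x * e - x)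
      = cfcₙ (fun t ↦ t * (1 - g t) ^ 2) a := by
    have h₁ : star (x * e - x) * (x * e - x)
        = e * a * e - e * a - a * e + a := by
      simp only [star_sub, star_mul, hesa.star_eq, ha_def]
      noncomm_ring
    have hgg : cfcₙ (fun t ↦ g t * t * g t) a = e * a * e := by
      rw [show (fun t ↦ g t * t * g t) = fun t ↦ (g t * t) * g t from rfl]
      rw [cfcₙ_mul (fun t ↦ g t * t) g a ((hgc.continuousOn.mul (by fun_prop))) (by simp [hg0])
        hgc.continuousOn hg0]
      rw [cfcₙ_mul _ _ a hgc.continuousOn hg0 (by fun_prop) (by simp)]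
      rw [cfcₙ_id' ℝ a ha, ← he]
    have hga : cfcₙ (fun t ↦ g t * t) a = e * a := by
      rw [cfcₙ_mul _ _ a hgc.continuousOn hg0 (by fun_prop) (by simp)]
      rw [cfcₙ_id' ℝ a ha, ← he]
    have hag : cfcₙ (fun t ↦ t * g t) a = a * e := by
      rw [cfcₙ_mul _ _ a (by fun_prop) (by simp) hgc.continuousOn hg0]
      rw [cfcₙ_id' ℝ a ha, ← he]
    have h₂ : cfcₙ (fun t ↦ t * (1 - g t) ^ 2) a
        = cfcₙ (fun t ↦ (g t * t * g t - g t * t) - (t * g t - t)) a := by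
      apply cfcₙ_congr; intro t _; ring
    rw [h₁, h₂]
    rw [cfcₙ_sub (fun t ↦ g t * t * g t - g t * t) (fun t ↦ t * g t - t) a
      (((hgc.continuousOn.mul (by fun_prop)).mul hgc.continuousOn).sub
        (hgc.continuousOn.mul (by fun_prop))) (by simp [hg0])
      (((by fun_prop : ContinuousOn (fun t : ℝ ↦ t) _).mul hgc.continuousOn).sub
        (by fun_prop)) (by simp [hg0])]
    rw [cfcₙ_sub (fun t ↦ g t * t * g t) (fun t ↦ g t * t) a ((hgc.continuousOn.mul (by fun_prop)).mul hgc.continuousOn)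
      (by simp [hg0]) (hgc.continuousOn.mul (by fun_prop)) (by simp [hg0])]
    rw [cfcₙ_sub (fun t ↦ t * g t) (fun t ↦ t) a ((by fun_prop : ContinuousOn (fun t : ℝ ↦ t) _).mul hgc.continuousOn)
      (by simp [hg0]) (by fun_prop) (by simp)]
    rw [hgg, hga, hag, cfcₙ_id' ℝ a ha]
    abel
  -- norm bound
  have hb : ‖cfcₙ (fun t ↦ t * (1 - g t) ^ 2) a‖ ≤ ε ^ 2 / 2 := by
    apply norm_cfcₙ_le
    intro t _
    have h1 : 1 - g t = δ / (t ^ 2 + δ) := by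
      rw [hg_def]
      field_simp
      ring
    rw [h1]
    rw [Real.norm_eq_abs, abs_mul, abs_pow, abs_div, abs_of_nonneg hδ.le,
      abs_of_nonneg (by positivity : (0:ℝ) ≤ t ^ 2 + δ), div_pow,
      ← mul_div_assoc, div_le_iff₀ (by positivity)]
    have h2 : (0:ℝ) ≤ |t| := abs_nonneg t
    have h3 : (0:ℝ) < ε ^ 2 := by positivity
    simp only [hδ_def]
    have h4 : 2 * |t| * ε ^ 2 ≤ t ^ 2 + ε ^ 4 := by
      nlinarith [sq_nonneg (|t| - ε ^ 2), sq_abs t]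
    have h5 : 2 * |t| * ε ^ 2 * ε ^ 4 ≤ (t ^ 2 + ε ^ 4) ^ 2 := by
      nlinarith [mul_le_mul_of_nonneg_right h4 (show (0:ℝ) ≤ t ^ 2 + ε ^ 4 by positivity),
        mul_nonneg (mul_nonneg (mul_nonneg (by norm_num : (0:ℝ) ≤ 2) h2) h3.le) (sq_nonneg t)]
    nlinarith [mul_le_mul_of_nonneg_left h5 (le_of_lt (half_pos h3))]
  have hnorm : ‖x * e - x‖ * ‖x * e - x‖ ≤ ε ^ 2 / 2 := by
    rw [← CStarRing.norm_star_mul_self, key]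
    exact hb
  have := norm_nonneg (x * e - x)
  nlinarith


/-- Let `A` be a C*-algebra, `𝒜 ⊆ A` a dense *-subalgebra, and
`I 1, …, I n ⊆ A` closed two-sided ideals such that `I j ∩ 𝒜` is dense in `I j` for each `j`.
Then `(⋂ j, I j) ∩ 𝒜` is dense in `⋂ j, I j`. -/
theorem stmt2 {A : Type*} [NonUnitalCStarAlgebra A] [StarModule ℂ A]
    (𝒜 : NonUnitalStarSubalgebra ℂ A) (h𝒜 : Dense (𝒜 : Set A))
    (n : ℕ) (I : Fin n → TwoSidedIdeal A)
    (hIc : ∀ j, IsClosed ((I j : Set A)))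
    (hdense : ∀ j, closure ((I j : Set A) ∩ (𝒜 : Set A)) = (I j : Set A)) :
    closure ((⋂ j, (I j : Set A)) ∩ (𝒜 : Set A)) = ⋂ j, (I j : Set A) := by
  induction n with
  | zero =>
      have h0 : (⋂ j : Fin 0, (I j : Set A)) = Set.univ := by simp
      rw [h0, Set.univ_inter, h𝒜.closure_eq]
  | succ n ih =>
      set K : Set A := ⋂ j : Fin n, ((I j.succ : Set A)) with hK_def
      have hK : closure (K ∩ (𝒜 : Set A)) = K :=
        ih (fun j ↦ I j.succ) (fun j ↦ hIc _) (fun j ↦ hdense _)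
      have hKc : IsClosed K := isClosed_iInter fun j ↦ hIc _
      have hrw : (⋂ j : Fin (n+1), (I j : Set A)) = (I 0 : Set A) ∩ K := by
        ext y
        simp only [Set.mem_iInter, Set.mem_inter_iff, hK_def, SetLike.mem_coe]
        exact ⟨fun h ↦ ⟨h 0, fun j ↦ h j.succ⟩, fun h ↦ Fin.cases h.1 h.2⟩
      rw [hrw]
      apply Set.Subset.antisymm
      · exact closure_minimal Set.inter_subset_left ((hIc 0).inter hKc)
      · rintro x ⟨hxI, hxK⟩
        rw [Metric.mem_closure_iff]
        intro ε hε
        -- step 1 : approximate unit element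
        obtain ⟨c, hc⟩ := key_approx x (show (0:ℝ) < ε/4 by linarith)
        set e : A := (star x * x) * c with he_def
        have heK : e ∈ K := by
          simp only [hK_def, Set.mem_iInter, SetLike.mem_coe] at hxK ⊢
          intro j
          exact (I j.succ).mul_mem_right _ _ ((I j.succ).mul_mem_left _ _ (hxK j))
        -- step 2 : approximate e by an element of K ∩ 𝒜
        have he' : e ∈ closure (K ∩ (𝒜 : Set A)) := by rw [hK]; exact heK
        rw [Metric.mem_closure_iff] at he'
        obtain ⟨e', he'mem, he'close⟩ := he' (ε/(4*(‖x‖+1))) (by positivity)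
        -- step 3 : approximate x by an element of I 0 ∩ 𝒜
        have hx0 : x ∈ closure ((I 0 : Set A) ∩ (𝒜 : Set A)) := by rw [hdense 0]; exact hxI
        rw [Metric.mem_closure_iff] at hx0
        obtain ⟨a', ha'mem, ha'close⟩ := hx0 (ε/(4*(‖e'‖+1))) (by positivity)
        refine ⟨a' * e', ⟨⟨?_, ?_⟩, ?_⟩, ?_⟩
        · exact (I 0).mul_mem_right _ _ ha'mem.1
        · simp only [hK_def, Set.mem_iInter, SetLike.mem_coe]
          intro j
          exact (I j.succ).mul_mem_left _ _ (Set.mem_iInter.mp he'mem.1 j)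
        · exact mul_mem ha'mem.2 he'mem.2
        · have t1 : ‖x - x * e‖ < ε/4 := by rwa [norm_sub_rev]
          have t2 : ‖x * e - x * e'‖ ≤ ‖x‖ * ‖e - e'‖ := by
            rw [← mul_sub]; exact norm_mul_le _ _
          have t2' : ‖e - e'‖ < ε/(4*(‖x‖+1)) := by
            rwa [← dist_eq_norm]
          have t2'' : ‖x * e - x * e'‖ ≤ ε/4 := by
            calc ‖x * e - x * e'‖ ≤ ‖x‖ * ‖e - e'‖ := t2
              _ ≤ ‖x‖ * (ε/(4*(‖x‖+1))) :=
                  mul_le_mul_of_nonneg_left t2'.le (norm_nonneg x)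
              _ ≤ ε/4 := small_aux _ _ (norm_nonneg x) hε
          have t3 : ‖x * e' - a' * e'‖ ≤ ε/4 := by
            calc ‖x * e' - a' * e'‖ = ‖(x - a') * e'‖ := by rw [sub_mul]
              _ ≤ ‖x - a'‖ * ‖e'‖ := norm_mul_le _ _
              _ ≤ (ε/(4*(‖e'‖+1))) * ‖e'‖ := by
                  refine mul_le_mul_of_nonneg_right ?_ (norm_nonneg e')
                  rw [← dist_eq_norm]; exact ha'close.le
              _ ≤ ε/4 := by
                  rw [mul_comm]
                  exact small_aux _ _ (norm_nonneg e') hε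
          calc dist x (a' * e') = ‖x - a' * e'‖ := dist_eq_norm _ _
            _ = ‖(x - x * e) + ((x * e - x * e') + (x * e' - a' * e'))‖ := by abel_nf
            _ ≤ ‖x - x * e‖ + (‖x * e - x * e'‖ + ‖x * e' - a' * e'‖) :=
                (norm_add_le _ _).trans (by gcongr; exact norm_add_le _ _)
            _ < ε := by linarith
end

section
/- Let Γ be a group and let 𝒳 be a Chabauty-closed set of subgroups of Γ. Then for every X ∈ 𝒳 there exists Y ∈ 𝒳 with Y ≤ X such that Y is minimal in 𝒳, i.e. whenever Y' ∈ 𝒳 and Y' ≤ Y one has Y' = Y. -/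
/-- The characteristic function of a subgroup, viewed as an element of the product space
`G → Bool` (with `Bool` discrete and `G → Bool` carrying the product topology).  The Chabauty
topology on the set of subgroups of `G` is the subspace topology under `H ↦ chi H`. -/
noncomputable def chi {G : Type*} [Group G] (H : Subgroup G) : G → Bool :=
  fun g => @decide (g ∈ H) (Classical.propDecidable _)

lemma chi_eq_true_iff {G : Type*} [Group G] (H : Subgroup G) (g : G) :
    chi H g = true ↔ g ∈ H := by
  simp [chi]

lemma chi_injective {G : Type*} [Group G] : Function.Injective (chi (G := G)) := by
  intro H K h
  ext g
  rw [← chi_eq_true_iff, ← chi_eq_true_iff, h]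

/-- In a nonempty chain, any finitely many elements have a common lower bound in the chain. -/
lemma chain_finite_lb {G : Type*} [Group G] (c : Set (Subgroup G))
    (hc : IsChain (· ≤ ·) c) (hne : c.Nonempty) (I : Finset G) :
    ∃ Y ∈ c, ∀ g ∈ I, g ∉ sInf c → g ∉ Y := by
  classical
  induction I using Finset.induction_on with
  | empty => exact ⟨hne.choose, hne.choose_spec, by simp⟩
  | @insert a I ha ih =>
    obtain ⟨Y, hYc, hY⟩ := ih
    by_cases haInf : a ∈ sInf c
    · exact ⟨Y, hYc, fun g hg hgInf => hY g (by
        rcases Finset.mem_insert.mp hg with rfl | hg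
        · exact absurd haInf hgInf
        · exact hg) hgInf⟩
    · have : ∃ Z ∈ c, a ∉ Z := by
        by_contra h
        push_neg at h
        exact haInf (Subgroup.mem_sInf.mpr h)
      obtain ⟨Z, hZc, hZ⟩ := this
      rcases eq_or_ne Y Z with rfl | hYZ
      · exact ⟨Y, hYc, fun g hg hgInf => by
          rcases Finset.mem_insert.mp hg with rfl | hg
          · exact hZ
          · exact hY g hg hgInf⟩
      rcases hc hYc hZc hYZ with hle | hle
      · exact ⟨Y, hYc, fun g hg hgInf => by
          rcases Finset.mem_insert.mp hg with rfl | hg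
          · exact fun h => hZ (hle h)
          · exact hY g hg hgInf⟩
      · exact ⟨Z, hZc, fun g hg hgInf => by
          rcases Finset.mem_insert.mp hg with rfl | hg
          · exact hZ
          · exact fun h => hY g hg hgInf (hle h)⟩

lemma sInf_chain_mem {Γ : Type*} [Group Γ] (𝒳 : Set (Subgroup Γ))
    (hX : IsClosed (chi '' 𝒳)) (c : Set (Subgroup Γ)) (hsub : c ⊆ 𝒳)
    (hc : IsChain (· ≤ ·) c) (hne : c.Nonempty) : sInf c ∈ 𝒳 := by
  have hmem : chi (sInf c) ∈ chi '' 𝒳 := by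
    rw [← hX.closure_eq]
    rw [mem_closure_iff]
    intro o ho hxo
    obtain ⟨I, u, hu, hsub'⟩ := isOpen_pi_iff.mp ho _ hxo
    obtain ⟨Y, hYc, hY⟩ := chain_finite_lb c hc hne I
    refine ⟨chi Y, hsub' ?_, ⟨Y, hsub hYc, rfl⟩⟩
    intro g hg
    have : chi Y g = chi (sInf c) g := by
      by_cases hgInf : g ∈ sInf c
      · have : g ∈ Y := Subgroup.mem_sInf.mp hgInf Y hYc
        simp [chi, this, hgInf]
      · have : g ∉ Y := hY g hg hgInf
        simp [chi, this, hgInf]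
    rw [this]
    exact (hu g hg).2
  obtain ⟨Y, hY, hchi⟩ := hmem
  rwa [← chi_injective hchi]

/-- Let `Γ` be a group and `𝒳` a Chabauty-closed set of subgroups of `Γ`.
Then every `X ∈ 𝒳` contains some `Y ∈ 𝒳` that is minimal in `𝒳`. -/
theorem stmt5 {Γ : Type*} [Group Γ] (𝒳 : Set (Subgroup Γ))
    (hX : IsClosed (chi '' 𝒳)) :
    ∀ X ∈ 𝒳, ∃ Y ∈ 𝒳, Y ≤ X ∧ ∀ Y' ∈ 𝒳, Y' ≤ Y → Y' = Y := by
  intro X hXmem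
  obtain ⟨m, hXm, hm⟩ := zorn_le_nonempty₀ (α := (Subgroup Γ)ᵒᵈ)
    {Y : (Subgroup Γ)ᵒᵈ | OrderDual.ofDual Y ∈ 𝒳 ∧ OrderDual.ofDual Y ≤ X}
    (fun c hcs hc y hy => by
      set c' : Set (Subgroup Γ) := OrderDual.ofDual '' c with hc'
      have hsub : c' ⊆ 𝒳 := by
        rintro _ ⟨z, hz, rfl⟩; exact (hcs hz).1
      have hchain : IsChain (· ≤ ·) c' := by
        rintro _ ⟨a, ha, rfl⟩ _ ⟨b, hb, rfl⟩ hne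
        rcases hc ha hb (fun h => hne (congrArg OrderDual.ofDual h)) with h | h
        · exact Or.inr h
        · exact Or.inl h
      have hne : c'.Nonempty := ⟨OrderDual.ofDual y, y, hy, rfl⟩
      refine ⟨OrderDual.toDual (sInf c'), ⟨sInf_chain_mem 𝒳 hX c' hsub hchain hne, ?_⟩, ?_⟩
      · exact le_trans (sInf_le (⟨y, hy, rfl⟩ : OrderDual.ofDual y ∈ c')) (hcs hy).2
      · intro z hz
        change sInf c' ≤ OrderDual.ofDual z
        exact sInf_le (⟨z, hz, rfl⟩ : OrderDual.ofDual z ∈ c'))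
    (OrderDual.toDual X) ⟨hXmem, le_refl X⟩
  refine ⟨OrderDual.ofDual m, hm.1.1, hXm, ?_⟩
  intro Y' hY' hle
  exact le_antisymm hle (hm.2 (y := OrderDual.toDual Y') ⟨hY', hle.trans hm.1.2⟩ hle)
end
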